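/- Let g : (0,∞) → (0,∞) satisfy the optimal power-adaptation constraint E[(1/g(S) − 1/Z)·1{Z > g(S)}] = S for every S > 0. Then (i) g(S) → 0 as S → ∞; (ii) if M := sup{z : F(z) < 1} is finite, then g(S) → M as S → 0⁺; and (iii) if {z : F(z) < 1} is unbounded above, then g(S) → ∞ as S → 0⁺. -/

import Mathlib

open MeasureTheory Filter Topology

set_option linter.unusedSectionVars false

section helpers

variable {Ω : Type*} [MeasurableSpace Ω] {P : Measure Ω} [IsProbabilityMeasure P]
  {Z : Ω → ℝ}

lemma wf_nonneg {t : ℝ} (ht : 0 < t) (ω : Ω) :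
    0 ≤ (if t < Z ω then t⁻¹ - (Z ω)⁻¹ else 0) := by
  split_ifs with h
  · have : (Z ω)⁻¹ ≤ t⁻¹ := inv_anti₀ ht h.le
    linarith
  · exact le_refl _

lemma wf_int (hZ : Measurable Z) {t : ℝ} (ht : 0 < t) :
    Integrable (fun ω => if t < Z ω then t⁻¹ - (Z ω)⁻¹ else 0) P := by
  have hm : Measurable (fun ω => if t < Z ω then t⁻¹ - (Z ω)⁻¹ else 0) :=
    Measurable.ite (hZ measurableSet_Ioi) (measurable_const.sub hZ.inv) measurable_const
  refine (integrable_const t⁻¹).mono' hm.aestronglyMeasurable ?_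
  filter_upwards with ω
  rw [Real.norm_eq_abs, abs_le]
  constructor
  · have := wf_nonneg (Z := Z) ht ω
    linarith [inv_nonneg.2 ht.le]
  · split_ifs with h
    · have h1 : 0 < Z ω := ht.trans h
      have : 0 ≤ (Z ω)⁻¹ := inv_nonneg.2 h1.le
      linarith
    · positivity

lemma wf_mono (hZ : Measurable Z) {t₁ t₂ : ℝ} (ht₁ : 0 < t₁) (h12 : t₁ ≤ t₂) :
    ∫ ω, (if t₂ < Z ω then t₂⁻¹ - (Z ω)⁻¹ else 0) ∂P
      ≤ ∫ ω, (if t₁ < Z ω then t₁⁻¹ - (Z ω)⁻¹ else 0) ∂P := by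
  refine integral_mono (wf_int hZ (ht₁.trans_le h12)) (wf_int hZ ht₁) ?_
  intro ω
  by_cases h2 : t₂ < Z ω
  · have h1 : t₁ < Z ω := h12.trans_lt h2
    simp only [h1, h2, if_true]
    have : t₂⁻¹ ≤ t₁⁻¹ := inv_anti₀ ht₁ h12
    linarith
  · simp only [h2, if_false]
    exact wf_nonneg ht₁ ω

lemma wf_pos (hZ : Measurable Z) {t t' : ℝ} (ht : 0 < t) (htt' : t < t')
    (hF : P {ω | Z ω ≤ t'} < 1) :
    0 < ∫ ω, (if t < Z ω then t⁻¹ - (Z ω)⁻¹ else 0) ∂P := by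
  have hs : MeasurableSet {ω | t' < Z ω} := hZ measurableSet_Ioi
  have hcompl : {ω | t' < Z ω} = {ω | Z ω ≤ t'}ᶜ := by
    ext ω; simp [not_le]
  have hpos : 0 < P {ω | t' < Z ω} := by
    have hm2 : MeasurableSet {ω | Z ω ≤ t'} := hZ measurableSet_Iic
    rw [hcompl, prob_compl_eq_one_sub hm2]
    exact tsub_pos_of_lt hF
  have hne : P {ω | t' < Z ω} ≠ ⊤ := measure_ne_top P _
  have hc : 0 < (t⁻¹ - t'⁻¹) * (P {ω | t' < Z ω}).toReal := by
    have : t'⁻¹ < t⁻¹ := inv_strictAnti₀ ht htt'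
    have h2 : 0 < (P {ω | t' < Z ω}).toReal := ENNReal.toReal_pos hpos.ne' hne
    nlinarith
  refine hc.trans_le ?_
  have hkey : ∫ ω, Set.indicator {ω | t' < Z ω} (fun _ => t⁻¹ - t'⁻¹) ω ∂P
      ≤ ∫ ω, (if t < Z ω then t⁻¹ - (Z ω)⁻¹ else 0) ∂P := by
    refine integral_mono ((integrable_const (t⁻¹ - t'⁻¹)).indicator hs) (wf_int hZ ht) ?_
    intro ω
    by_cases h' : t' < Z ω
    · have h1 : t < Z ω := htt'.trans h'
      have : (Z ω)⁻¹ ≤ t'⁻¹ := inv_anti₀ (ht.trans htt') h'.le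
      have hmem : ω ∈ {ω | t' < Z ω} := h'
      simp only [Set.indicator_of_mem hmem, h1, if_true]
      linarith
    · have hmem : ω ∉ {ω | t' < Z ω} := h'
      simp only [Set.indicator_of_notMem hmem]
      exact wf_nonneg ht ω
  calc (t⁻¹ - t'⁻¹) * (P {ω | t' < Z ω}).toReal
      = ∫ ω, Set.indicator {ω | t' < Z ω} (fun _ => t⁻¹ - t'⁻¹) ω ∂P := by
        rw [integral_indicator_const _ hs, smul_eq_mul, mul_comm]; rfl
    _ ≤ _ := hkey

end helpers

/-- **Limits of the water-filling threshold.**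
Let `Z` be an effective channel gain with `P(Z > 0) = 1`, and let `g : (0,∞) → (0,∞)` satisfy
the optimal power-adaptation constraint `E[(1/g(S) − 1/Z)·1{Z > g(S)}] = S` for every `S > 0`.
Then (i) `g(S) → 0` as `S → ∞`; (ii) if the set `{z : F(z) < 1}` is bounded above (its supremum
`M` is finite), then `g(S) → M` as `S → 0⁺`; (iii) if that set is unbounded above, then
`g(S) → ∞` as `S → 0⁺`. -/
theorem threshold_limits
    {Ω : Type*} [MeasurableSpace Ω] (P : Measure Ω) [IsProbabilityMeasure P]
    (Z : Ω → ℝ) (hZ : Measurable Z) (hZpos : P {ω | 0 < Z ω} = 1)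
    (g : ℝ → ℝ) (hgpos : ∀ S, 0 < S → 0 < g S)
    (hg : ∀ S, 0 < S →
      ∫ ω, (if g S < Z ω then (g S)⁻¹ - (Z ω)⁻¹ else 0) ∂P = S) :
    Tendsto g atTop (𝓝 0) ∧
    (BddAbove {z : ℝ | P {ω | Z ω ≤ z} < 1} →
      Tendsto g (𝓝[>] 0) (𝓝 (sSup {z : ℝ | P {ω | Z ω ≤ z} < 1}))) ∧
    (¬ BddAbove {z : ℝ | P {ω | Z ω ≤ z} < 1} →
      Tendsto g (𝓝[>] 0) atTop) := by
  set A : Set ℝ := {z : ℝ | P {ω | Z ω ≤ z} < 1} with hA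
  -- 0 ∈ A
  have h0A : (0 : ℝ) ∈ A := by
    have hz0 : {ω | Z ω ≤ (0:ℝ)} = {ω | 0 < Z ω}ᶜ := by
      ext ω; simp [not_lt]
    have : P {ω | Z ω ≤ (0:ℝ)} = 0 := by
      have hm2 : MeasurableSet {ω | 0 < Z ω} := hZ measurableSet_Ioi
      rw [hz0, prob_compl_eq_one_sub hm2, hZpos, tsub_self]
    simp [hA, this]
  -- key eventual lemma
  have key : ∀ t t' : ℝ, 0 < t → t < t' → t' ∈ A →
      ∀ᶠ S in 𝓝[>] (0:ℝ), t < g S := by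
    intro t t' ht htt' ht'A
    have hc : 0 < ∫ ω, (if t < Z ω then t⁻¹ - (Z ω)⁻¹ else 0) ∂P :=
      wf_pos hZ ht htt' ht'A
    filter_upwards [Ioo_mem_nhdsGT_of_mem (Set.left_mem_Ico.2 hc)] with S hS
    by_contra h
    push_neg at h
    have hS0 : 0 < S := hS.1
    have := wf_mono (P := P) hZ (hgpos S hS0) h
    rw [hg S hS0] at this
    linarith [hS.2]
  -- (i)
  have part1 : Tendsto g atTop (𝓝 0) := by
    have hub : ∀ S : ℝ, 0 < S → g S ≤ S⁻¹ := by
      intro S hS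
      have hgS := hgpos S hS
      have hle : S ≤ (g S)⁻¹ := by
        calc S = ∫ ω, (if g S < Z ω then (g S)⁻¹ - (Z ω)⁻¹ else 0) ∂P := (hg S hS).symm
          _ ≤ ∫ _, (g S)⁻¹ ∂P := by
              refine integral_mono (wf_int hZ hgS) (integrable_const _) ?_
              intro ω
              dsimp only
              split_ifs with h
              · have : 0 < Z ω := hgS.trans h
                have : 0 ≤ (Z ω)⁻¹ := inv_nonneg.2 this.le
                linarith
              · positivity
          _ = (g S)⁻¹ := by simp
      calc g S = ((g S)⁻¹)⁻¹ := (inv_inv _).symm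
        _ ≤ S⁻¹ := inv_anti₀ hS hle
    refine squeeze_zero' ?_ ?_ tendsto_inv_atTop_zero
    · filter_upwards [eventually_gt_atTop (0:ℝ)] with S hS using (hgpos S hS).le
    · filter_upwards [eventually_gt_atTop (0:ℝ)] with S hS using hub S hS
  refine ⟨part1, ?_, ?_⟩
  · -- (ii)
    intro hbdd
    set M := sSup A with hM
    -- upper bound : g S ≤ M for all S > 0
    have hgleM : ∀ S : ℝ, 0 < S → g S ≤ M := by
      intro S hS
      by_contra h
      push_neg at h
      set m := (M + g S) / 2 with hm
      have hMm : M < m := by simp [hm]; linarith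
      have hmg : m < g S := by simp [hm]; linarith
      have hmA : m ∉ A := fun hc => absurd (le_csSup hbdd hc) (not_le.2 hMm)
      have hFm : P {ω | Z ω ≤ m} = 1 := by
        have h1 := prob_le_one (μ := P) (s := {ω | Z ω ≤ m})
        rcases h1.lt_or_eq with h2 | h2
        · exact absurd h2 hmA
        · exact h2
      have hnull : P {ω | m < Z ω} = 0 := by
        have hcompl : {ω | m < Z ω} = {ω | Z ω ≤ m}ᶜ := by ext ω; simp [not_le]
        have hm2 : MeasurableSet {ω | Z ω ≤ m} := hZ measurableSet_Iic
        rw [hcompl, prob_compl_eq_one_sub hm2, hFm, tsub_self]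
      have hzero : ∫ ω, (if g S < Z ω then (g S)⁻¹ - (Z ω)⁻¹ else 0) ∂P = 0 := by
        refine integral_eq_zero_of_ae ?_
        have hae : ∀ᵐ ω ∂P, ¬ m < Z ω := by
          rw [ae_iff]
          simpa using hnull
        filter_upwards [hae] with ω hω
        have : ¬ g S < Z ω := fun hc => hω (hmg.trans hc)
        simp [this]
      rw [hg S hS] at hzero
      linarith
    rw [tendsto_order]
    constructor
    · intro b hb
      rcases le_or_gt b 0 with hb0 | hb0
      · filter_upwards [self_mem_nhdsWithin] with S hS
        exact hb0.trans_lt (hgpos S hS)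
      · obtain ⟨t', ht'A, hbt'⟩ := exists_lt_of_lt_csSup ⟨0, h0A⟩ hb
        exact key b t' hb0 hbt' ht'A
    · intro b hb
      filter_upwards [self_mem_nhdsWithin] with S hS
      exact (hgleM S hS).trans_lt hb
  · -- (iii)
    intro hunbdd
    rw [tendsto_atTop]
    intro b
    obtain ⟨t', ht'A, hbt'⟩ := not_bddAbove_iff.1 hunbdd (max b 1)
    have ht : (0:ℝ) < max b 1 := lt_of_lt_of_le one_pos (le_max_right b 1)
    filter_upwards [key (max b 1) t' ht hbt' ht'A] with S hS
    exact (le_max_left b 1).trans hS.le
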